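/- Let (S_k)_{k≥1} be finite subsets of ℝ² and δ_k > 0 with ∑_{k≥1} |S_k| δ_k < ∞. Then the set G := ⋂_{n≥1} ⋃_{k≥n} B(S_k,δ_k) is purely unrectifiable: for every C¹ curve γ : I → ℝ², the set γ⁻¹(G) has Lebesgue measure zero. -/

import Mathlib

open MeasureTheory Filter Metric Set Topology RealInnerProductSpace
open scoped ENNReal

noncomputable section

/-- The Euclidean plane. -/
abbrev E2 := EuclideanSpace ℝ (Fin 2)

/-- `IsC1Curve a b γ γ'` : `γ` restricted to the compact nondegenerate interval `[a,b]`
is a C¹ curve with (one-sided at endpoints) derivative `γ'`, continuous and of unit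
norm on `[a,b]`. -/
def IsC1Curve (a b : ℝ) (γ γ' : ℝ → E2) : Prop :=
  a < b ∧ ContinuousOn γ' (Set.Icc a b) ∧
    (∀ t ∈ Set.Icc a b, HasDerivWithinAt γ (γ' t) (Set.Icc a b) t) ∧
    (∀ t ∈ Set.Icc a b, ‖γ' t‖ = 1)

/-- Let `S_k ⊆ ℝ²` be finite, `δ_k > 0` with `∑ |S_k| δ_k < ∞`. Then
`G = ⋂_n ⋃_{k≥n} B(S_k,δ_k)` is purely unrectifiable: every C¹ curve meets it in a set of
Lebesgue measure zero. -/
theorem stmt14 (S : ℕ → Set E2) (hS : ∀ k, (S k).Finite)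
    (δ : ℕ → ℝ) (hδ : ∀ k, 0 < δ k)
    (hsum : Summable fun k => ((S k).ncard : ℝ) * δ k)
    (G : Set E2)
    (hG : G = ⋂ n : ℕ, ⋃ k, ⋃ _ : n ≤ k, Metric.thickening (δ k) (S k))
    (a b : ℝ) (γ γ' : ℝ → E2) (hγ : IsC1Curve a b γ γ') :
    volume (γ ⁻¹' G ∩ Set.Icc a b) = 0 := by
  obtain ⟨hab, hγ'c, hd, hn⟩ := hγ
  set c : ℕ → ℝ := fun k => ((S k).ncard : ℝ) * δ k with hc
  have hc0 : ∀ k, 0 ≤ c k := fun k => mul_nonneg (Nat.cast_nonneg _) (hδ k).le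
  set f : ℕ → ℝ≥0∞ := fun k => ENNReal.ofReal (8 * c k) with hfdef
  have hfsum : ∑' k, f k ≠ ∞ := by
    rw [← ENNReal.ofReal_tsum_of_nonneg (fun k => mul_nonneg (by norm_num) (hc0 k)) (hsum.mul_left 8)]
    exact ENNReal.ofReal_ne_top
  have htend := ENNReal.tendsto_sum_nat_add f hfsum
  apply measure_null_of_locally_null
  intro t ht
  obtain ⟨htG, htI⟩ := ht
  set v := γ' t with hv
  have hvt : ⟪v, γ' t⟫ = 1 := by
    rw [real_inner_self_eq_norm_sq, hn t htI]; norm_num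
  have hcont : ContinuousWithinAt (fun s => ⟪v, γ' s⟫) (Set.Icc a b) t :=
    ((innerSL ℝ v).continuous.comp_continuousOn hγ'c) t htI
  have hev : {s | (1:ℝ)/2 < ⟪v, γ' s⟫} ∈ 𝓝[Set.Icc a b] t := by
    apply hcont (Ioi_mem_nhds ?_)
    show (1:ℝ)/2 < ⟪v, γ' t⟫
    rw [hvt]; norm_num
  obtain ⟨ε, hε, hball⟩ := Metric.mem_nhdsWithin_iff.1 hev
  set J : Set ℝ := Metric.ball t ε ∩ Set.Icc a b with hJdef
  have hJhalf : ∀ s ∈ J, (1:ℝ)/2 ≤ ⟪v, γ' s⟫ := fun s hs => (hball hs).le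
  have hJsub : J ⊆ Set.Icc a b := Set.inter_subset_right
  have hJconv : Convex ℝ J := (convex_ball t ε).inter (convex_Icc a b)
  refine ⟨(γ ⁻¹' G ∩ Set.Icc a b) ∩ Metric.ball t ε,
    Filter.inter_mem self_mem_nhdsWithin
      (mem_nhdsWithin_of_mem_nhds (Metric.ball_mem_nhds t hε)), ?_⟩
  have hsub : (γ ⁻¹' G ∩ Set.Icc a b) ∩ Metric.ball t ε ⊆ γ ⁻¹' G ∩ J := by
    rintro s ⟨⟨h1, h2⟩, h3⟩; exact ⟨h1, h3, h2⟩
  refine measure_mono_null hsub ?_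
  -- key per-ball estimate
  have key : ∀ (x : E2) (k : ℕ),
      volume (γ ⁻¹' Metric.ball x (δ k) ∩ J) ≤ ENNReal.ofReal (8 * δ k) := by
    intro x k
    set A := γ ⁻¹' Metric.ball x (δ k) ∩ J with hA
    rcases A.eq_empty_or_nonempty with h | ⟨s0, hs0⟩
    · simp [h]
    · have hdiam : ∀ s ∈ A, |s - s0| ≤ 4 * δ k := by
        intro s hs
        have hg : ∀ r ∈ J, HasDerivWithinAt (fun r => ⟪v, γ r⟫ - r)
            (⟪v, γ' r⟫ - 1) J r := by
          intro r hr
          have h1 := (hasDerivWithinAt_const r J v).inner ℝ ((hd r (hJsub hr)).mono hJsub)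
          have h2 := h1.sub (hasDerivWithinAt_id r J)
          simp only [inner_zero_left, add_zero] at h2
          exact h2
        have hbound : ∀ r ∈ J, ‖⟪v, γ' r⟫ - 1‖ ≤ 1/2 := by
          intro r hr
          have h1 : ⟪v, γ' r⟫ ≤ 1 := by
            calc ⟪v, γ' r⟫ ≤ ‖v‖ * ‖γ' r‖ := real_inner_le_norm _ _
              _ = 1 := by rw [hn t htI, hn r (hJsub hr)]; ring
          have h2 := hJhalf r hr
          rw [Real.norm_eq_abs, abs_le]; constructor <;> linarith
        have hmvt := hJconv.norm_image_sub_le_of_norm_hasDerivWithin_le hg hbound hs0.2 hs.2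
        rw [Real.norm_eq_abs, Real.norm_eq_abs] at hmvt
        have hclose : |⟪v, γ s⟫ - ⟪v, γ s0⟫| < 2 * δ k := by
          have e1 : ⟪v, γ s⟫ - ⟪v, γ s0⟫ = ⟪v, γ s - γ s0⟫ := (inner_sub_right v _ _).symm
          have e2 : |⟪v, γ s - γ s0⟫| ≤ ‖v‖ * ‖γ s - γ s0‖ := abs_real_inner_le_norm _ _
          have e3 : ‖γ s - γ s0‖ ≤ ‖γ s - x‖ + ‖γ s0 - x‖ := by
            have := norm_sub_le (γ s - x) (γ s0 - x); simpa using this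
          have e4 : ‖γ s - x‖ < δ k := by
            have := hs.1; rwa [Set.mem_preimage, Metric.mem_ball, dist_eq_norm] at this
          have e5 : ‖γ s0 - x‖ < δ k := by
            have := hs0.1; rwa [Set.mem_preimage, Metric.mem_ball, dist_eq_norm] at this
          have e6 : ‖v‖ = 1 := hn t htI
          rw [e1]
          calc |⟪v, γ s - γ s0⟫| ≤ ‖v‖ * ‖γ s - γ s0‖ := e2
            _ = ‖γ s - γ s0‖ := by rw [e6]; ring
            _ ≤ ‖γ s - x‖ + ‖γ s0 - x‖ := e3
            _ < 2 * δ k := by linarith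
        have hdecomp : |s - s0| ≤ |⟪v, γ s⟫ - ⟪v, γ s0⟫| +
            |(⟪v, γ s⟫ - s) - (⟪v, γ s0⟫ - s0)| := by
          have : s - s0 = (⟪v, γ s⟫ - ⟪v, γ s0⟫) -
              ((⟪v, γ s⟫ - s) - (⟪v, γ s0⟫ - s0)) := by ring
          rw [this]
          exact abs_sub _ _
        linarith
      have hIcc : A ⊆ Set.Icc (s0 - 4 * δ k) (s0 + 4 * δ k) := by
        intro s hs
        have := abs_le.1 (hdiam s hs)
        constructor <;> [linarith [this.1]; linarith [this.2]]
      calc volume A ≤ volume (Set.Icc (s0 - 4 * δ k) (s0 + 4 * δ k)) := measure_mono hIcc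
        _ = ENNReal.ofReal (8 * δ k) := by rw [Real.volume_Icc]; ring_nf
  -- per-k estimate on the thickening
  have keyk : ∀ k, volume (γ ⁻¹' Metric.thickening (δ k) (S k) ∩ J) ≤ f k := by
    intro k
    have heq : γ ⁻¹' Metric.thickening (δ k) (S k) ∩ J =
        ⋃ x ∈ (hS k).toFinset, (γ ⁻¹' Metric.ball x (δ k) ∩ J) := by
      rw [Metric.thickening_eq_biUnion_ball]
      ext s
      simp only [Set.mem_inter_iff, Set.mem_preimage, Set.mem_iUnion, (hS k).mem_toFinset]
      tauto
    rw [heq]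
    calc volume (⋃ x ∈ (hS k).toFinset, (γ ⁻¹' Metric.ball x (δ k) ∩ J))
        ≤ ∑ x ∈ (hS k).toFinset, volume (γ ⁻¹' Metric.ball x (δ k) ∩ J) :=
          measure_biUnion_finset_le _ _
      _ ≤ ∑ x ∈ (hS k).toFinset, ENNReal.ofReal (8 * δ k) :=
          Finset.sum_le_sum fun x _ => key x k
      _ = ((hS k).toFinset.card : ℝ≥0∞) * ENNReal.ofReal (8 * δ k) := by
          rw [Finset.sum_const, nsmul_eq_mul]
      _ = f k := by
          rw [hfdef, hc, ← Set.ncard_eq_toFinset_card (S k) (hS k),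
            ← ENNReal.ofReal_natCast, ← ENNReal.ofReal_mul (by positivity)]
          congr 1
          ring
  -- tail bound for each n
  have hbn : ∀ n, volume (γ ⁻¹' G ∩ J) ≤ ∑' j, f (j + n) := by
    intro n
    have hsubn : γ ⁻¹' G ∩ J ⊆
        ⋃ j, (γ ⁻¹' Metric.thickening (δ (j + n)) (S (j + n)) ∩ J) := by
      intro s hs
      have hmem : γ s ∈ ⋃ k, ⋃ _ : n ≤ k, Metric.thickening (δ k) (S k) := by
        have := hs.1
        rw [hG] at this
        rw [Set.mem_preimage, Set.mem_iInter] at this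
        exact this n
      rw [Set.mem_iUnion] at hmem
      obtain ⟨k, hk⟩ := hmem
      rw [Set.mem_iUnion] at hk
      obtain ⟨hnk, hkmem⟩ := hk
      rw [Set.mem_iUnion]
      refine ⟨k - n, ?_⟩
      rw [Nat.sub_add_cancel hnk]
      exact ⟨hkmem, hs.2⟩
    calc volume (γ ⁻¹' G ∩ J)
        ≤ volume (⋃ j, (γ ⁻¹' Metric.thickening (δ (j + n)) (S (j + n)) ∩ J)) :=
          measure_mono hsubn
      _ ≤ ∑' j, volume (γ ⁻¹' Metric.thickening (δ (j + n)) (S (j + n)) ∩ J) :=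
          measure_iUnion_le _
      _ ≤ ∑' j, f (j + n) := ENNReal.tsum_le_tsum fun j => keyk (j + n)
  have : volume (γ ⁻¹' G ∩ J) ≤ 0 := ge_of_tendsto' htend hbn
  exact le_antisymm this zero_le

end
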